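/- Let Y = [a, b] ⊂ ℝ be a compact interval, let μ and ν be Borel probability measures on Y, let ε > 0, and let φ, ψ : Y → ℝ be continuous functions satisfying the Sinkhorn system: φ(y₀) = ε·log ∫_Y exp((y₀·y₁ − ψ(y₁))/ε) dν(y₁) for all y₀ ∈ Y, and ψ(y₁) = ε·log ∫_Y exp((y₀·y₁ − φ(y₀))/ε) dμ(y₀) for all y₁ ∈ Y. Let π be the Sinkhorn coupling with density exp((y₀·y₁ − φ(y₀) − ψ(y₁))/ε) with respect to μ ⊗ ν, and extend φ and ψ to twice differentiable functions on ℝ via their defining log-integral formulas. Then ∫_{Y×Y} (y₀ + y₁)² dπ(y₀, y₁) = ∫_Y [(y₀ + φ'(y₀))² + ε·φ''(y₀)] dμ(y₀) = ∫_Y [(y₁ + ψ'(y₁))² + ε·ψ''(y₁)] dν(y₁). -/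

import Mathlib

open MeasureTheory
open scoped ENNReal


lemma intgB {s : Set ℝ} (hs : MeasurableSet s) (ρ : Measure ℝ) [IsFiniteMeasure ρ]
    (f : ℝ → ℝ) (hf : Measurable f) (C : ℝ) (hC : ∀ y ∈ s, |f y| ≤ C) :
    IntegrableOn f s ρ := by
  refine Integrable.mono' (integrable_const C) hf.aestronglyMeasurable ?_
  filter_upwards [ae_restrict_mem hs] with y hy
  simpa using hC y hy

lemma derivA {s : Set ℝ} (hs : MeasurableSet s) (ρ : Measure ℝ) [IsFiniteMeasure ρ]
    {ε : ℝ} (hε : 0 < ε) (g h : ℝ → ℝ) (hg : Measurable g) (hh : Measurable h)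
    (M Cg Ch : ℝ) (hM : ∀ y ∈ s, |y| ≤ M) (hCg : ∀ y ∈ s, |g y| ≤ Cg)
    (hCh : ∀ y ∈ s, |h y| ≤ Ch) (x₀ : ℝ) :
    HasDerivAt (fun x => ∫ y in s, h y * Real.exp ((x * y - g y) / ε) ∂ρ)
      (∫ y in s, (y / ε) * h y * Real.exp ((x₀ * y - g y) / ε) ∂ρ) x₀ := by
  have hmeasF : ∀ x : ℝ, Measurable fun y => h y * Real.exp ((x * y - g y) / ε) := by
    intro x
    exact hh.mul ((((measurable_const.mul measurable_id).sub hg).div_const ε).exp)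
  have hmeasF' : Measurable fun y => (y / ε) * h y * Real.exp ((x₀ * y - g y) / ε) := by
    exact ((measurable_id.div_const ε).mul hh).mul
      ((((measurable_const.mul measurable_id).sub hg).div_const ε).exp)
  set B : ℝ := (M / ε) * Ch * Real.exp (((|x₀| + 1) * M + Cg) / ε) with hB
  have key := hasDerivAt_integral_of_dominated_loc_of_deriv_le (μ := ρ.restrict s)
    (F := fun x y => h y * Real.exp ((x * y - g y) / ε))
    (F' := fun x y => (y / ε) * h y * Real.exp ((x * y - g y) / ε))
    (x₀ := x₀) (bound := fun _ => B) (Metric.ball_mem_nhds x₀ one_pos)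
    (Filter.Eventually.of_forall fun x => (hmeasF x).aestronglyMeasurable)
    ?_ hmeasF'.aestronglyMeasurable ?_ (integrable_const B) ?_
  · exact key.2
  · -- integrability of F x₀
    refine intgB hs ρ _ (hmeasF x₀) (Ch * Real.exp ((|x₀| * M + Cg) / ε)) ?_
    intro y hy
    rw [abs_mul, Real.abs_exp]
    have h1 : |h y| ≤ Ch := hCh y hy
    have h2 : Real.exp ((x₀ * y - g y) / ε) ≤ Real.exp ((|x₀| * M + Cg) / ε) := by
      apply Real.exp_le_exp.mpr
      apply div_le_div_of_nonneg_right ?_ hε.le |>.trans_eq rfl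
      have : x₀ * y ≤ |x₀| * M := by
        calc x₀ * y ≤ |x₀ * y| := le_abs_self _
        _ = |x₀| * |y| := abs_mul _ _
        _ ≤ |x₀| * M := by
            exact mul_le_mul_of_nonneg_left (hM y hy) (abs_nonneg _)
      have h3 : -g y ≤ Cg := (neg_le_abs _).trans (hCg y hy)
      linarith
    have hhnn : (0:ℝ) ≤ |h y| := abs_nonneg _
    have hCh0 : (0:ℝ) ≤ Ch := hhnn.trans h1
    exact mul_le_mul h1 h2 (Real.exp_nonneg _) hCh0
  · -- bound on F'
    filter_upwards [ae_restrict_mem hs] with y hy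
    intro x hx
    have hyM : |y| ≤ M := hM y hy
    have hM0 : (0:ℝ) ≤ M := (abs_nonneg _).trans hyM
    have hxb : |x| ≤ |x₀| + 1 := by
      have := mem_ball_iff_norm.mp hx
      have : |x - x₀| < 1 := by simpa [Real.norm_eq_abs] using this
      have h4 := abs_sub_abs_le_abs_sub x x₀
      linarith
    have h2 : Real.exp ((x * y - g y) / ε) ≤ Real.exp (((|x₀| + 1) * M + Cg) / ε) := by
      apply Real.exp_le_exp.mpr
      apply div_le_div_of_nonneg_right ?_ hε.le |>.trans_eq rfl
      have hxy : x * y ≤ (|x₀| + 1) * M := by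
        calc x * y ≤ |x * y| := le_abs_self _
        _ = |x| * |y| := abs_mul _ _
        _ ≤ (|x₀| + 1) * M := by
            exact mul_le_mul hxb hyM (abs_nonneg _) (by positivity)
      have h3 : -g y ≤ Cg := (neg_le_abs _).trans (hCg y hy)
      linarith
    have h1 : |y / ε| ≤ M / ε := by
      rw [abs_div, abs_of_pos hε]
      exact div_le_div_of_nonneg_right hyM hε.le |>.trans_eq rfl
    have hhb : |h y| ≤ Ch := hCh y hy
    have hCh0 : (0:ℝ) ≤ Ch := (abs_nonneg _).trans hhb
    rw [Real.norm_eq_abs, abs_mul, abs_mul, Real.abs_exp]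
    calc |y / ε| * |h y| * Real.exp ((x * y - g y) / ε)
        ≤ (M / ε) * Ch * Real.exp (((|x₀| + 1) * M + Cg) / ε) := by
          refine mul_le_mul (mul_le_mul h1 hhb (abs_nonneg _) (by positivity))
            h2 (Real.exp_nonneg _) (by positivity)
      _ = B := rfl
  · -- differentiability
    filter_upwards [ae_restrict_mem hs] with y _
    intro x _
    have h1 : HasDerivAt (fun x : ℝ => (x * y - g y) / ε) (y / ε) x :=
      ((hasDerivAt_mul_const y).sub_const (g y)).div_const ε
    have h2 := (h1.exp).const_mul (h y)
    convert h2 using 1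
    · rfl
    · ring

lemma Zpos {s : Set ℝ} (hs : MeasurableSet s) (ρ : Measure ℝ) [IsFiniteMeasure ρ]
    (hρ : ρ s ≠ 0) {ε : ℝ} (hε : 0 < ε) (g : ℝ → ℝ) (hg : Measurable g)
    (M Cg : ℝ) (hCg : ∀ y ∈ s, |g y| ≤ Cg) (hM : ∀ y ∈ s, |y| ≤ M) (x : ℝ) :
    0 < ∫ y in s, Real.exp ((x * y - g y) / ε) ∂ρ := by
  set c : ℝ := Real.exp (-(|x| * M + Cg) / ε) with hc
  have hcpos : 0 < c := Real.exp_pos _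
  have hle : ∀ y ∈ s, c ≤ Real.exp ((x * y - g y) / ε) := by
    intro y hy
    apply Real.exp_le_exp.mpr
    apply div_le_div_of_nonneg_right ?_ hε.le |>.trans_eq rfl
    have h1 : -(x * y) ≤ |x| * M := by
      calc -(x * y) ≤ |x * y| := neg_le_abs _
      _ = |x| * |y| := abs_mul _ _
      _ ≤ |x| * M := mul_le_mul_of_nonneg_left (hM y hy) (abs_nonneg _)
    have h2 : g y ≤ Cg := (le_abs_self _).trans (hCg y hy)
    linarith
  have hint : IntegrableOn (fun y => Real.exp ((x * y - g y) / ε)) s ρ := by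
    refine intgB hs ρ _ ((((measurable_const.mul measurable_id).sub hg).div_const ε).exp)
      (Real.exp ((|x| * M + Cg) / ε)) ?_
    intro y hy
    rw [Real.abs_exp]
    apply Real.exp_le_exp.mpr
    apply div_le_div_of_nonneg_right ?_ hε.le |>.trans_eq rfl
    have h1 : x * y ≤ |x| * M := by
      calc x * y ≤ |x * y| := le_abs_self _
      _ = |x| * |y| := abs_mul _ _
      _ ≤ |x| * M := mul_le_mul_of_nonneg_left (hM y hy) (abs_nonneg _)
    have h2 : -g y ≤ Cg := (neg_le_abs _).trans (hCg y hy)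
    linarith
  have h0 : 0 < c * (ρ s).toReal := by
    apply mul_pos hcpos
    exact ENNReal.toReal_pos hρ (measure_ne_top ρ s)
  calc (0:ℝ) < c * (ρ s).toReal := h0
    _ = ∫ _ in s, c ∂ρ := by rw [setIntegral_const, smul_eq_mul]; exact mul_comm _ _
    _ ≤ ∫ y in s, Real.exp ((x * y - g y) / ε) ∂ρ := by
        refine setIntegral_mono_on (integrableOn_const (measure_ne_top ρ s))
          hint hs hle

lemma absIcc {a b y : ℝ} (hy : y ∈ Set.Icc a b) : |y| ≤ max |a| |b| := by
  rw [abs_le]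
  constructor
  · have : -|a| ≤ a := neg_abs_le a
    have := hy.1
    have := le_max_left |a| |b|
    linarith
  · have : b ≤ |b| := le_abs_self b
    have := hy.2
    have := le_max_right |a| |b|
    linarith

lemma sideEq (a b : ℝ) (ρ τ : Measure ℝ) [IsProbabilityMeasure ρ] [IsProbabilityMeasure τ]
    (hτ : τ (Set.Icc a b)ᶜ = 0)
    {ε : ℝ} (hε : 0 < ε) (f g : ℝ → ℝ) (hg : Measurable g)
    (hgc : ContinuousOn g (Set.Icc a b))
    (hS : ∀ x ∈ Set.Icc a b,
      f x = ε * Real.log (∫ y in Set.Icc a b, Real.exp ((x * y - g y) / ε) ∂τ))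
    (F : ℝ → ℝ)
    (hF : F = fun x => ε * Real.log (∫ y in Set.Icc a b, Real.exp ((x * y - g y) / ε) ∂τ)) :
    ∫ x in Set.Icc a b,
        (∫ y in Set.Icc a b, (x + y) ^ 2 * Real.exp ((x * y - f x - g y) / ε) ∂τ) ∂ρ
    = ∫ x in Set.Icc a b, ((x + deriv F x) ^ 2 + ε * deriv (deriv F) x) ∂ρ := by
  set s := Set.Icc a b with hsdef
  have hs : MeasurableSet s := measurableSet_Icc
  set M : ℝ := max |a| |b| with hMdef
  have hM : ∀ y ∈ s, |y| ≤ M := fun y hy => absIcc hy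
  obtain ⟨Cg, hCg'⟩ := (isCompact_Icc).exists_bound_of_continuousOn hgc
  have hCg : ∀ y ∈ s, |g y| ≤ Cg := fun y hy => by simpa using hCg' y hy
  have hτs : τ s ≠ 0 := by
    have h1 : τ s + τ sᶜ = 1 := by
      rw [measure_add_measure_compl hs]; exact measure_univ
    rw [hτ, add_zero] at h1
    simp [h1]
  set Z : ℝ → ℝ := fun x => ∫ y in s, Real.exp ((x * y - g y) / ε) ∂τ with hZdef
  set W : ℝ → ℝ := fun x => ∫ y in s, (y / ε) * Real.exp ((x * y - g y) / ε) ∂τ with hWdef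
  set V : ℝ → ℝ := fun x =>
    ∫ y in s, (y / ε) * (y / ε) * Real.exp ((x * y - g y) / ε) ∂τ with hVdef
  have hZd : ∀ x, HasDerivAt Z (W x) x := by
    intro x
    have := derivA hs τ hε g (fun _ => (1:ℝ)) hg measurable_const M Cg 1 hM hCg
      (fun y _ => by norm_num) x
    simpa [one_mul, mul_one] using this
  have hWd : ∀ x, HasDerivAt W (V x) x := by
    intro x
    have hh : Measurable fun y : ℝ => y / ε := measurable_id.div_const ε
    have hb : ∀ y ∈ s, |y / ε| ≤ M / ε := by
      intro y hy
      rw [abs_div, abs_of_pos hε]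
      exact div_le_div_of_nonneg_right (hM y hy) hε.le
    exact derivA hs τ hε g (fun y => y / ε) hg hh M Cg (M / ε) hM hCg hb x
  have hZpos : ∀ x, 0 < Z x := fun x => Zpos hs τ hτs hε g hg M Cg hCg hM x
  have hFd : ∀ x, HasDerivAt F (ε * (W x / Z x)) x := by
    intro x
    rw [hF]
    exact ((hZd x).log (hZpos x).ne').const_mul ε
  have hdF : deriv F = fun x => ε * (W x / Z x) := funext fun x => (hFd x).deriv
  have hd2F : ∀ x, deriv (deriv F) x = ε * ((V x * Z x - W x * W x) / Z x ^ 2) := by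
    intro x
    rw [hdF]
    exact (((hWd x).div (hZd x) (hZpos x).ne').const_mul ε).deriv
  refine setIntegral_congr_fun hs ?_
  intro x hx
  -- integrability pieces
  have hEx : ∀ y ∈ s, Real.exp ((x * y - g y) / ε) ≤ Real.exp ((|x| * M + Cg) / ε) := by
    intro y hy
    apply Real.exp_le_exp.mpr
    apply div_le_div_of_nonneg_right ?_ hε.le |>.trans_eq rfl
    have h1 : x * y ≤ |x| * M := by
      calc x * y ≤ |x * y| := le_abs_self _
      _ = |x| * |y| := abs_mul _ _
      _ ≤ |x| * M := mul_le_mul_of_nonneg_left (hM y hy) (abs_nonneg _)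
    have h2 : -g y ≤ Cg := (neg_le_abs _).trans (hCg y hy)
    linarith
  have hEm : Measurable fun y => Real.exp ((x * y - g y) / ε) :=
    (((measurable_const.mul measurable_id).sub hg).div_const ε).exp
  have intE : IntegrableOn (fun y => Real.exp ((x * y - g y) / ε)) s τ := by
    refine intgB hs τ _ hEm (Real.exp ((|x| * M + Cg) / ε)) ?_
    intro y hy; rw [Real.abs_exp]; exact hEx y hy
  have intE1 : IntegrableOn (fun y => (y / ε) * Real.exp ((x * y - g y) / ε)) s τ := by
    refine intgB hs τ _ ((measurable_id.div_const ε).mul hEm)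
      ((M / ε) * Real.exp ((|x| * M + Cg) / ε)) ?_
    intro y hy
    rw [abs_mul, Real.abs_exp]
    refine mul_le_mul ?_ (hEx y hy) (Real.exp_nonneg _) (by positivity)
    rw [abs_div, abs_of_pos hε]
    exact div_le_div_of_nonneg_right (hM y hy) hε.le
  have intE2 : IntegrableOn
      (fun y => (y / ε) * (y / ε) * Real.exp ((x * y - g y) / ε)) s τ := by
    refine intgB hs τ _ (((measurable_id.div_const ε).mul (measurable_id.div_const ε)).mul hEm)
      ((M / ε) * (M / ε) * Real.exp ((|x| * M + Cg) / ε)) ?_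
    intro y hy
    have h1 : |y / ε| ≤ M / ε := by
      rw [abs_div, abs_of_pos hε]
      exact div_le_div_of_nonneg_right (hM y hy) hε.le
    have hMε : (0:ℝ) ≤ M / ε := (abs_nonneg _).trans h1
    rw [abs_mul, abs_mul, Real.abs_exp]
    refine mul_le_mul (mul_le_mul h1 h1 (abs_nonneg _) hMε) (hEx y hy)
      (Real.exp_nonneg _) (by positivity)
  -- inner integral computation
  have key : (∫ y in s, (x + y) ^ 2 * Real.exp ((x * y - f x - g y) / ε) ∂τ)
      = (Z x)⁻¹ * (x ^ 2 * Z x + (2 * x * ε) * W x + ε ^ 2 * V x) := by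
    have hsplit : (fun y => (x + y) ^ 2 * Real.exp ((x * y - f x - g y) / ε))
        = fun y => Real.exp (-(f x) / ε) *
          (x ^ 2 * Real.exp ((x * y - g y) / ε)
            + ((2 * x * ε) * ((y / ε) * Real.exp ((x * y - g y) / ε))
              + ε ^ 2 * ((y / ε) * (y / ε) * Real.exp ((x * y - g y) / ε)))) := by
      funext y
      have h1 : (x * y - f x - g y) / ε = -(f x) / ε + (x * y - g y) / ε := by ring
      rw [h1, Real.exp_add]
      field_simp
      ring
    have i0 : Integrable (fun y => x ^ 2 * Real.exp ((x * y - g y) / ε)) (τ.restrict s) :=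
      intE.const_mul _
    have i1 : Integrable (fun y => (2 * x * ε) * ((y / ε) * Real.exp ((x * y - g y) / ε)))
        (τ.restrict s) := intE1.const_mul _
    have i2 : Integrable (fun y => ε ^ 2 * ((y / ε) * (y / ε) * Real.exp ((x * y - g y) / ε)))
        (τ.restrict s) := intE2.const_mul _
    have i12 : Integrable (fun y => (2 * x * ε) * ((y / ε) * Real.exp ((x * y - g y) / ε))
        + ε ^ 2 * ((y / ε) * (y / ε) * Real.exp ((x * y - g y) / ε))) (τ.restrict s) := i1.add i2
    rw [hsplit, integral_const_mul, integral_add i0 i12, integral_add i1 i2,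
      integral_const_mul, integral_const_mul, integral_const_mul]
    have hfx : Real.exp (-(f x) / ε) = (Z x)⁻¹ := by
      have h2 : -(f x) / ε = -Real.log (Z x) := by
        rw [hS x hx]; field_simp; rfl
      rw [h2, Real.exp_neg, Real.exp_log (hZpos x)]
    rw [hfx]
    ring
  have hdFx : deriv F x = ε * (W x / Z x) := (hFd x).deriv
  dsimp only
  rw [key, hdFx, hd2F x]
  have hZ := (hZpos x).ne'
  field_simp
  ring



/-- variance functional: for Sinkhorn potentials `(φ, ψ)` on a compact
interval `Y = [a, b]` with coupling `π` of density `exp((y₀·y₁ - φ y₀ - ψ y₁)/ε)` w.r.t.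
`μ ⊗ ν`, and `Φ, Ψ` the twice differentiable extensions of `φ, ψ` to `ℝ` via their
defining log-integral formulas,
`∫_{Y×Y} (y₀+y₁)² dπ = ∫_Y [(y₀+Φ'(y₀))² + ε·Φ''(y₀)] dμ
  = ∫_Y [(y₁+Ψ'(y₁))² + ε·Ψ''(y₁)] dν`. -/
theorem stmt17 (a b : ℝ) (hab : a ≤ b)
    (μ ν : Measure ℝ) [IsProbabilityMeasure μ] [IsProbabilityMeasure ν]
    (hμY : μ (Set.Icc a b)ᶜ = 0) (hνY : ν (Set.Icc a b)ᶜ = 0)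
    (ε : ℝ) (hε : 0 < ε)
    (φ ψ : ℝ → ℝ) (hφm : Measurable φ) (hψm : Measurable ψ)
    (hφc : ContinuousOn φ (Set.Icc a b)) (hψc : ContinuousOn ψ (Set.Icc a b))
    (hS1 : ∀ y₀ ∈ Set.Icc a b, φ y₀
      = ε * Real.log (∫ y₁ in Set.Icc a b, Real.exp ((y₀ * y₁ - ψ y₁) / ε) ∂ν))
    (hS2 : ∀ y₁ ∈ Set.Icc a b, ψ y₁
      = ε * Real.log (∫ y₀ in Set.Icc a b, Real.exp ((y₀ * y₁ - φ y₀) / ε) ∂μ))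
    (π : Measure (ℝ × ℝ))
    (hπ : π = (μ.prod ν).withDensity
      (fun p => ENNReal.ofReal (Real.exp ((p.1 * p.2 - φ p.1 - ψ p.2) / ε))))
    (Φ Ψ : ℝ → ℝ)
    (hΦ : Φ = fun y₀ =>
      ε * Real.log (∫ y₁ in Set.Icc a b, Real.exp ((y₀ * y₁ - ψ y₁) / ε) ∂ν))
    (hΨ : Ψ = fun y₁ =>
      ε * Real.log (∫ y₀ in Set.Icc a b, Real.exp ((y₀ * y₁ - φ y₀) / ε) ∂μ)) :
    (∫ p in Set.Icc a b ×ˢ Set.Icc a b, (p.1 + p.2) ^ 2 ∂π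
      = ∫ y₀ in Set.Icc a b, ((y₀ + deriv Φ y₀) ^ 2 + ε * deriv (deriv Φ) y₀) ∂μ) ∧
    (∫ p in Set.Icc a b ×ˢ Set.Icc a b, (p.1 + p.2) ^ 2 ∂π
      = ∫ y₁ in Set.Icc a b, ((y₁ + deriv Ψ y₁) ^ 2 + ε * deriv (deriv Ψ) y₁) ∂ν) := by
  have hs : MeasurableSet (Set.Icc a b) := measurableSet_Icc
  set s := Set.Icc a b with hsdef
  set M : ℝ := max |a| |b| with hMdef
  have hM : ∀ y ∈ s, |y| ≤ M := fun y hy => absIcc hy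
  have hM0 : 0 ≤ M := le_trans (abs_nonneg a) (le_max_left _ _)
  obtain ⟨Cφ, hCφ'⟩ := isCompact_Icc.exists_bound_of_continuousOn hφc
  obtain ⟨Cψ, hCψ'⟩ := isCompact_Icc.exists_bound_of_continuousOn hψc
  have hCφ : ∀ y ∈ s, |φ y| ≤ Cφ := fun y hy => by simpa using hCφ' y hy
  have hCψ : ∀ y ∈ s, |ψ y| ≤ Cψ := fun y hy => by simpa using hCψ' y hy
  set e : ℝ × ℝ → ℝ := fun p => Real.exp ((p.1 * p.2 - φ p.1 - ψ p.2) / ε) with hedef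
  have hem : Measurable e :=
    ((((measurable_fst.mul measurable_snd).sub (hφm.comp measurable_fst)).sub
      (hψm.comp measurable_snd)).div_const ε).exp
  have hgm : Measurable fun p : ℝ × ℝ => e p * (p.1 + p.2) ^ 2 :=
    hem.mul ((measurable_fst.add measurable_snd).pow_const 2)
  -- integrability of the density times square on the restricted product
  have hint : Integrable (fun p : ℝ × ℝ => e p * (p.1 + p.2) ^ 2)
      ((μ.restrict s).prod (ν.restrict s)) := by
    refine Integrable.mono'
      (integrable_const (Real.exp ((M * M + Cφ + Cψ) / ε) * (2 * M) ^ 2))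
      hgm.aestronglyMeasurable ?_
    rw [Measure.prod_restrict]
    filter_upwards [ae_restrict_mem (hs.prod hs)] with p hp
    obtain ⟨hp1, hp2⟩ := hp
    have h1 : e p ≤ Real.exp ((M * M + Cφ + Cψ) / ε) := by
      apply Real.exp_le_exp.mpr
      apply div_le_div_of_nonneg_right ?_ hε.le |>.trans_eq rfl
      have hxy : p.1 * p.2 ≤ M * M := by
        calc p.1 * p.2 ≤ |p.1 * p.2| := le_abs_self _
        _ = |p.1| * |p.2| := abs_mul _ _
        _ ≤ M * M := mul_le_mul (hM _ hp1) (hM _ hp2) (abs_nonneg _) hM0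
      have h2 : -φ p.1 ≤ Cφ := (neg_le_abs _).trans (hCφ _ hp1)
      have h3 : -ψ p.2 ≤ Cψ := (neg_le_abs _).trans (hCψ _ hp2)
      linarith
    have h4 : (p.1 + p.2) ^ 2 ≤ (2 * M) ^ 2 := by
      obtain ⟨ha1, ha2⟩ := abs_le.mp (hM _ hp1)
      obtain ⟨hb1, hb2⟩ := abs_le.mp (hM _ hp2)
      nlinarith
    have h5 : 0 ≤ e p := Real.exp_nonneg _
    have h6 : 0 ≤ (p.1 + p.2) ^ 2 := sq_nonneg _
    rw [Real.norm_eq_abs, abs_of_nonneg (mul_nonneg h5 h6)]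
    exact mul_le_mul h1 h4 h6 (Real.exp_nonneg _)
  -- rewrite the π-integral as an integral against μ.prod ν
  have hL0 : ∫ p in s ×ˢ s, (p.1 + p.2) ^ 2 ∂π
      = ∫ p, e p * (p.1 + p.2) ^ 2 ∂((μ.restrict s).prod (ν.restrict s)) := by
    rw [hπ]
    have hd : (fun p : ℝ × ℝ => ENNReal.ofReal (Real.exp ((p.1 * p.2 - φ p.1 - ψ p.2) / ε)))
        = fun p => ((fun q : ℝ × ℝ => (e q).toNNReal) p : ℝ≥0∞) := rfl
    rw [hd, setIntegral_withDensity_eq_setIntegral_smul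
      (show Measurable fun q : ℝ × ℝ => (e q).toNNReal from measurable_real_toNNReal.comp hem)
      _ (hs.prod hs)]
    rw [Measure.prod_restrict]
    refine integral_congr_ae (Filter.Eventually.of_forall fun p => ?_)
    show (e p).toNNReal • (p.1 + p.2) ^ 2 = e p * (p.1 + p.2) ^ 2
    rw [NNReal.smul_def, Real.coe_toNNReal _ (Real.exp_nonneg _), smul_eq_mul]
  constructor
  · -- φ side
    rw [hL0, integral_prod _ hint]
    have h7 : ∀ x : ℝ, (∫ y in s, e (x, y) * (x + y) ^ 2 ∂ν)
        = ∫ y in s, (x + y) ^ 2 * Real.exp ((x * y - φ x - ψ y) / ε) ∂ν := by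
      intro x
      refine integral_congr_ae (Filter.Eventually.of_forall fun y => ?_)
      simp only [hedef]
      ring
    calc ∫ x in s, (∫ y in s, e (x, y) * (x + y) ^ 2 ∂ν) ∂μ
        = ∫ x in s, (∫ y in s, (x + y) ^ 2 * Real.exp ((x * y - φ x - ψ y) / ε) ∂ν) ∂μ := by
          exact integral_congr_ae (Filter.Eventually.of_forall fun x => h7 x)
      _ = _ := sideEq a b μ ν hνY hε φ ψ hψm hψc hS1 Φ hΦ
  · -- ψ side
    have hcomm : ∀ x : ℝ, (∫ y in s, Real.exp ((y * x - φ y) / ε) ∂μ)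
        = ∫ y in s, Real.exp ((x * y - φ y) / ε) ∂μ := by
      intro x
      refine integral_congr_ae (Filter.Eventually.of_forall fun y => ?_)
      show Real.exp ((y * x - φ y) / ε) = Real.exp ((x * y - φ y) / ε)
      rw [mul_comm y x]
    have hS2' : ∀ x ∈ s, ψ x = ε * Real.log (∫ y in s, Real.exp ((x * y - φ y) / ε) ∂μ) := by
      intro x hx
      rw [hS2 x hx, hcomm x]
    have hΨ' : Ψ = fun x => ε * Real.log (∫ y in s, Real.exp ((x * y - φ y) / ε) ∂μ) :=
      hΨ.trans (funext fun x => by rw [hcomm x])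
    rw [hL0, integral_prod_symm _ hint]
    have h7 : ∀ u : ℝ, (∫ v in s, e (v, u) * (v + u) ^ 2 ∂μ)
        = ∫ v in s, (u + v) ^ 2 * Real.exp ((u * v - ψ u - φ v) / ε) ∂μ := by
      intro u
      refine integral_congr_ae (Filter.Eventually.of_forall fun v => ?_)
      simp only [hedef]
      rw [show (v * u - φ v - ψ u) / ε = (u * v - ψ u - φ v) / ε by ring]
      ring
    calc ∫ u in s, (∫ v in s, e (v, u) * (v + u) ^ 2 ∂μ) ∂ν
        = ∫ u in s, (∫ v in s, (u + v) ^ 2 * Real.exp ((u * v - ψ u - φ v) / ε) ∂μ) ∂ν := by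
          exact integral_congr_ae (Filter.Eventually.of_forall fun u => h7 u)
      _ = _ := sideEq a b ν μ hμY hε ψ φ hφm hφc hS2' Ψ hΨ'
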